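/- The piecewise-linear interpolant satisfies the uniform error bound ‖f − S‖_{L_∞[0,1]} ≤ h^{1 − 1/p} · ‖f′‖_{L_p[0,1]}, i.e. |f(x) − S(x)| ≤ h^{1−1/p}‖f′‖_{L_p[0,1]} for every x ∈ [0,1]. -/

import Mathlib

open MeasureTheory Set ENNReal

lemma find_interval {n : ℕ} (ξ : Fin (n + 1) → ℝ) (hmono : StrictMono ξ) (hn : 0 < n)
    {x : ℝ} (h0 : ξ 0 ≤ x) (h1 : x ≤ ξ (Fin.last n)) :
    ∃ j : Fin n, ξ j.castSucc ≤ x ∧ x ≤ ξ j.succ := by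
  classical
  set s := Finset.univ.filter (fun k : Fin (n + 1) => ξ k ≤ x) with hs_def
  have hs : s.Nonempty := ⟨0, by simp [hs_def, h0]⟩
  set k := s.max' hs with hk
  have hk_mem : k ∈ s := s.max'_mem hs
  have hkx : ξ k ≤ x := by simpa [hs_def] using hk_mem
  by_cases hlast : k = Fin.last n
  · refine ⟨⟨n - 1, by omega⟩, ?_, ?_⟩
    · exact le_trans (hmono.monotone (by exact Fin.le_last _)) (hlast ▸ hkx)
    · have : (⟨n - 1, by omega⟩ : Fin n).succ = Fin.last n := by
        ext; simp; omega
      rw [this]; exact h1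
  · have hklt : (k : ℕ) < n := by
      have := Fin.lt_last_iff_ne_last.mpr hlast
      omega
    refine ⟨⟨k, hklt⟩, by simpa using hkx, ?_⟩
    by_contra hxk
    push_neg at hxk
    have hmem : (⟨k, hklt⟩ : Fin n).succ ∈ s := by
      simp [hs_def]; exact hxk.le
    have := s.le_max' _ hmem
    rw [← hk] at this
    have : (k : ℕ) + 1 ≤ (k : ℕ) := this
    omega

lemma holder_bound (p : ℝ≥0∞) (hp : 1 ≤ p) (f' : ℝ → ℝ)
    (hf'int : IntegrableOn f' (Icc 0 1))
    (hf'Lp : MemLp f' p (volume.restrict (Icc 0 1)))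
    {u v h : ℝ} (huv : u ≤ v) (hsub : Icc u v ⊆ Icc 0 1) (hvu : v - u ≤ h) :
    |∫ t in u..v, f' t| ≤ h ^ (1 - 1 / p.toReal) *
      (eLpNorm f' p (volume.restrict (Icc 0 1))).toReal := by
  have h0 : (0:ℝ) ≤ h := le_trans (by linarith) hvu
  have hmeas : volume.restrict (Ioc u v) ≤ volume.restrict (Icc 0 1) :=
    Measure.restrict_mono (fun t ht => hsub ⟨ht.1.le, ht.2⟩) le_rfl
  have hasm : AEStronglyMeasurable f' (volume.restrict (Ioc u v)) :=
    hf'Lp.aestronglyMeasurable.mono_measure hmeas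
  have key : eLpNorm f' 1 (volume.restrict (Ioc u v)) ≤
      eLpNorm f' p (volume.restrict (Icc 0 1)) *
        ENNReal.ofReal h ^ (1 - 1 / p.toReal) := by
    calc eLpNorm f' 1 (volume.restrict (Ioc u v))
        ≤ eLpNorm f' p (volume.restrict (Ioc u v)) *
            (volume.restrict (Ioc u v)) univ ^ (1 / (1:ℝ≥0∞).toReal - 1 / p.toReal) :=
          eLpNorm_le_eLpNorm_mul_rpow_measure_univ hp hasm
      _ ≤ eLpNorm f' p (volume.restrict (Icc 0 1)) *
            ENNReal.ofReal h ^ (1 - 1 / p.toReal) := by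
          gcongr
          · simp only [ENNReal.toReal_one]
            rw [Measure.restrict_apply_univ, Real.volume_Ioc]
            have hexp : (0:ℝ) ≤ 1 - 1 / p.toReal := by
              rcases eq_or_ne p ∞ with rfl | hptop
              · simp
              · have h1 : 1 ≤ p.toReal := ENNReal.toReal_one ▸
                  ENNReal.toReal_mono hptop hp
                have : 1 / p.toReal ≤ 1 := by
                  rw [div_le_one (by linarith)]; linarith
                linarith
            rw [show (1:ℝ)/1 - 1/p.toReal = 1 - 1/p.toReal by norm_num]
            exact ENNReal.rpow_le_rpow (ENNReal.ofReal_le_ofReal hvu) hexp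
  have hint : IntegrableOn f' (Ioc u v) :=
    hf'int.mono_set (fun t ht => hsub ⟨ht.1.le, ht.2⟩)
  calc |∫ t in u..v, f' t| ≤ ∫ t in u..v, |f' t| :=
        intervalIntegral.abs_integral_le_integral_abs huv
    _ = ∫ t in Ioc u v, |f' t| := by
        rw [intervalIntegral.integral_of_le huv]
    _ = (eLpNorm f' 1 (volume.restrict (Ioc u v))).toReal := by
        rw [eLpNorm_one_eq_lintegral_enorm,
          ← integral_norm_eq_lintegral_enorm hasm]
        simp [Real.norm_eq_abs]
    _ ≤ (eLpNorm f' p (volume.restrict (Icc 0 1)) *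
          ENNReal.ofReal h ^ (1 - 1 / p.toReal)).toReal := by
        refine ENNReal.toReal_mono ?_ key
        exact ENNReal.mul_ne_top hf'Lp.eLpNorm_ne_top
          (ENNReal.rpow_ne_top_of_nonneg (by
            rcases eq_or_ne p ∞ with rfl | hptop
            · simp
            · have h1 : 1 ≤ p.toReal := ENNReal.toReal_one ▸
                ENNReal.toReal_mono hptop hp
              have : 1 / p.toReal ≤ 1 := by
                rw [div_le_one (by linarith)]; linarith
              linarith) ENNReal.ofReal_ne_top)
    _ = h ^ (1 - 1 / p.toReal) *
          (eLpNorm f' p (volume.restrict (Icc 0 1))).toReal := by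
        rw [ENNReal.toReal_mul, ← ENNReal.toReal_rpow,
          ENNReal.toReal_ofReal h0, mul_comm]

/-- Uniform error bound for the piecewise-linear interpolant: if `f` is absolutely
continuous on `[0,1]` with a.e. derivative `f' ∈ L_p[0,1]`, and `S` interpolates
`f` at `0 = ξ_0 < ⋯ < ξ_n = 1` and is affine on each `[ξ_j, ξ_{j+1}]`, then
`|f(x) − S(x)| ≤ h^{1−1/p} ‖f'‖_{L_p[0,1]}` for every `x ∈ [0,1]`, where `h` is
the maximal spacing. -/
theorem stmt_15
    (p : ℝ≥0∞) (hp : 1 ≤ p)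
    {n : ℕ} (hn : 0 < n) (ξ : Fin (n + 1) → ℝ)
    (hmono : StrictMono ξ) (hξ0 : ξ 0 = 0) (hξ1 : ξ (Fin.last n) = 1)
    (h : ℝ)
    (hmax : IsGreatest (Set.range fun j : Fin n => ξ j.succ - ξ j.castSucc) h)
    (f f' : ℝ → ℝ)
    (hf'int : IntegrableOn f' (Icc 0 1))
    (hAC : ∀ x ∈ Icc (0 : ℝ) 1, f x = f 0 + ∫ t in (0 : ℝ)..x, f' t)
    (hf'Lp : MemLp f' p (volume.restrict (Icc 0 1)))
    (S : ℝ → ℝ)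
    (hSaff : ∀ j : Fin n, ∀ x ∈ Icc (ξ j.castSucc) (ξ j.succ),
      S x = f (ξ j.castSucc) +
        (f (ξ j.succ) - f (ξ j.castSucc)) / (ξ j.succ - ξ j.castSucc) *
          (x - ξ j.castSucc)) :
    ∀ x ∈ Icc (0 : ℝ) 1,
      |f x - S x| ≤ h ^ (1 - 1 / p.toReal) *
        (eLpNorm f' p (volume.restrict (Icc 0 1))).toReal := by
  intro x hx
  obtain ⟨j, hax, hxb⟩ := find_interval ξ hmono hn (hξ0 ▸ hx.1) (hξ1 ▸ hx.2)
  set a := ξ j.castSucc with ha_def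
  set b := ξ j.succ with hb_def
  have hab : a < b := hmono (Fin.castSucc_lt_succ : j.castSucc < j.succ)
  have ha0 : (0:ℝ) ≤ a := hξ0 ▸ hmono.monotone (Fin.zero_le _)
  have hb1 : b ≤ 1 := hξ1 ▸ hmono.monotone (Fin.le_last _)
  have hx0 : (0:ℝ) ≤ x := le_trans ha0 hax
  have hx1 : x ≤ 1 := le_trans hxb hb1
  have hba_h : b - a ≤ h := hmax.2 ⟨j, rfl⟩
  -- interval integrability on subintervals of [0,1]
  have hII : ∀ u v : ℝ, 0 ≤ u → u ≤ v → v ≤ 1 → IntervalIntegrable f' volume u v := by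
    intro u v hu huv hv
    refine IntegrableOn.intervalIntegrable ?_
    rw [uIcc_of_le huv]
    exact hf'int.mono_set (Icc_subset_Icc hu hv)
  have hdiff : ∀ u, 0 ≤ u → u ≤ 1 → ∀ v, 0 ≤ v → u ≤ v → v ≤ 1 →
      f v - f u = ∫ t in u..v, f' t := by
    intro u hu hu1 v hv huv hv1
    rw [hAC u ⟨hu, hu1⟩, hAC v ⟨hv, hv1⟩]
    have := intervalIntegral.integral_interval_sub_left
      (hII 0 v le_rfl hv hv1) (hII 0 u le_rfl hu hu1)
    linarith [this]
  set I1 := ∫ t in a..x, f' t with hI1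
  set I2 := ∫ t in x..b, f' t with hI2
  have hsum : I1 + I2 = ∫ t in a..b, f' t :=
    intervalIntegral.integral_add_adjacent_intervals
      (hII a x ha0 hax hx1) (hII x b hx0 hxb hb1)
  set lam := (x - a) / (b - a) with hlam
  have hlam0 : 0 ≤ lam := div_nonneg (by linarith) (by linarith)
  have hlam1 : lam ≤ 1 := by
    rw [hlam, div_le_one (by linarith)]; linarith
  have hfxS : f x - S x = (1 - lam) * I1 - lam * I2 := by
    rw [hSaff j x ⟨hax, hxb⟩]
    have e1 : f x - f a = I1 := hdiff a ha0 (hab.le.trans hb1) x hx0 hax hx1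
    have e2 : f b - f a = I1 + I2 := by
      rw [hsum]; exact hdiff a ha0 (hab.le.trans hb1) b (le_trans ha0 hab.le) hab.le hb1
    have hba : b - a ≠ 0 := by linarith
    rw [← ha_def, ← hb_def]
    have hl : (f b - f a) / (b - a) * (x - a) = lam * (I1 + I2) := by
      rw [e2, hlam]; ring
    linarith [e1, hl]
  set B := h ^ (1 - 1 / p.toReal) *
    (eLpNorm f' p (volume.restrict (Icc 0 1))).toReal with hB
  have hB1 : |I1| ≤ B :=
    holder_bound p hp f' hf'int hf'Lp hax (Icc_subset_Icc ha0 hx1) (by linarith)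
  have hB2 : |I2| ≤ B :=
    holder_bound p hp f' hf'int hf'Lp hxb (Icc_subset_Icc hx0 hb1) (by linarith)
  calc |f x - S x| = |(1 - lam) * I1 - lam * I2| := by rw [hfxS]
    _ ≤ |(1 - lam) * I1| + |lam * I2| := abs_sub _ _
    _ = (1 - lam) * |I1| + lam * |I2| := by
        rw [abs_mul, abs_mul, abs_of_nonneg (by linarith : (0:ℝ) ≤ 1 - lam),
          abs_of_nonneg hlam0]
    _ ≤ (1 - lam) * B + lam * B := by
        have := hB1; have := hB2
        have hBnn : 0 ≤ B := le_trans (abs_nonneg I1) hB1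
        nlinarith
    _ = B := by ring
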